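/- Let N ∈ ℝ^{m×d}, A ∈ ℝ^{n×d}, P positive diagonal, u ∈ ℝ^n, and let B ∈ ℝ^{d×k} be a matrix whose columns form a basis of ker(N). Assume AᵀPA restricted appropriately is invertible (A full column rank). Then B(BᵀAᵀPAB)⁺BᵀAᵀu = (AᵀPA)⁻¹( −Nᵀ(N(AᵀPA)⁻¹Nᵀ)⁺N(AᵀPA)⁻¹Aᵀu + Aᵀu ). -/

import Mathlib

open Matrix

open Classical in
/-- The Moore–Penrose pseudoinverse of a real matrix, defined via the four
Penrose conditions (it always exists and is unique for real matrices). -/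
noncomputable def moorePenrose {a b : ℕ} (M : Matrix (Fin a) (Fin b) ℝ) :
    Matrix (Fin b) (Fin a) ℝ :=
  if h : ∃ X : Matrix (Fin b) (Fin a) ℝ,
      M * X * M = M ∧ X * M * X = X ∧ (M * X)ᵀ = M * X ∧ (X * M)ᵀ = X * M
  then h.choose else 0

/-- Existence of a Moore–Penrose pseudoinverse for real symmetric matrices. -/
lemma exists_pinv_of_isHermitian {a : ℕ} {M : Matrix (Fin a) (Fin a) ℝ}
    (hM : M.IsHermitian) :
    ∃ X : Matrix (Fin a) (Fin a) ℝ,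
      M * X * M = M ∧ X * M * X = X ∧ (M * X)ᵀ = M * X ∧ (X * M)ᵀ = X * M := by
  classical
  set U : Matrix (Fin a) (Fin a) ℝ := (hM.eigenvectorUnitary : Matrix (Fin a) (Fin a) ℝ) with hU
  set d : Fin a → ℝ := hM.eigenvalues with hdd
  have hspec : M = U * diagonal d * star U := by
    have := hM.spectral_theorem
    simpa [RCLike.ofReal_real_eq_id, Function.comp] using this
  have hU2 : star U * U = 1 := Matrix.mem_unitaryGroup_iff'.mp (hM.eigenvectorUnitary).2
  have hstar : star U = Uᵀ := by
    rw [Matrix.star_eq_conjTranspose, Matrix.conjTranspose_eq_transpose_of_trivial]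
  have hmul : ∀ f g : Fin a → ℝ,
      (U * diagonal f * star U) * (U * diagonal g * star U)
        = U * diagonal (fun i => f i * g i) * star U := by
    intro f g
    have h1 : star U * (U * diagonal g * star U) = diagonal g * star U := by
      rw [← Matrix.mul_assoc, ← Matrix.mul_assoc, hU2, Matrix.one_mul]
    calc (U * diagonal f * star U) * (U * diagonal g * star U)
        = U * diagonal f * (star U * (U * diagonal g * star U)) := by
          rw [Matrix.mul_assoc]
      _ = U * diagonal f * (diagonal g * star U) := by rw [h1]
      _ = U * (diagonal f * diagonal g) * star U := by
          rw [Matrix.mul_assoc, Matrix.mul_assoc, Matrix.mul_assoc]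
      _ = U * diagonal (fun i => f i * g i) * star U := by
          rw [Matrix.diagonal_mul_diagonal]
  have htr : ∀ f : Fin a → ℝ, (U * diagonal f * star U)ᵀ = U * diagonal f * star U := by
    intro f
    rw [Matrix.transpose_mul, Matrix.transpose_mul, Matrix.diagonal_transpose, hstar,
      Matrix.transpose_transpose, Matrix.mul_assoc]
  set e : Fin a → ℝ := fun i => if d i = 0 then 0 else (d i)⁻¹ with he
  refine ⟨U * diagonal e * star U, ?_, ?_, ?_, ?_⟩
  · rw [hspec, hmul, hmul]
    congr 2
    funext i j
    by_cases hij : i = j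
    · subst hij
      by_cases h : d i = 0 <;> simp [Matrix.diagonal_apply_eq, he, h]
    · simp [Matrix.diagonal_apply_ne _ hij]
  · rw [hspec, hmul, hmul]
    congr 2
    funext i j
    by_cases hij : i = j
    · subst hij
      by_cases h : d i = 0 <;> simp [Matrix.diagonal_apply_eq, he, h]
    · simp [Matrix.diagonal_apply_ne _ hij]
  · rw [hspec, hmul, htr]
  · rw [hspec, hmul, htr]

lemma moorePenrose_spec {a : ℕ} {M : Matrix (Fin a) (Fin a) ℝ}
    (hM : M.IsHermitian) :
    M * moorePenrose M * M = M ∧ moorePenrose M * M * moorePenrose M = moorePenrose M ∧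
      (M * moorePenrose M)ᵀ = M * moorePenrose M ∧
      (moorePenrose M * M)ᵀ = moorePenrose M * M := by
  have h := exists_pinv_of_isHermitian hM
  rw [moorePenrose, dif_pos h]
  exact h.choose_spec

/-- Solving the affine-constrained weighted least squares step without explicit
access to a kernel basis `B` of `N`:
`B (BᵀAᵀPAB)⁺ Bᵀ Aᵀ u = (AᵀPA)⁻¹ (-Nᵀ (N (AᵀPA)⁻¹ Nᵀ)⁺ N (AᵀPA)⁻¹ Aᵀ u + Aᵀ u)`. -/
theorem constrained_least_squares_identity {n d m k : ℕ}
    (A : Matrix (Fin n) (Fin d) ℝ) (hA : Function.Injective A.mulVec)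
    (N : Matrix (Fin m) (Fin d) ℝ)
    (p : Fin n → ℝ) (hp : ∀ i, 0 < p i)
    (u : Fin n → ℝ)
    (B : Matrix (Fin d) (Fin k) ℝ)
    (hBind : LinearIndependent ℝ fun j : Fin k => Bᵀ j)
    (hBspan : LinearMap.range B.mulVecLin = LinearMap.ker N.mulVecLin)
    (S : Matrix (Fin d) (Fin d) ℝ) (hS : S = Aᵀ * Matrix.diagonal p * A) :
    B.mulVec ((moorePenrose (Bᵀ * S * B)).mulVec (Bᵀ.mulVec (Aᵀ.mulVec u))) =
      S⁻¹.mulVec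
        (-(Nᵀ.mulVec ((moorePenrose (N * S⁻¹ * Nᵀ)).mulVec
            (N.mulVec (S⁻¹.mulVec (Aᵀ.mulVec u)))))
          + Aᵀ.mulVec u) := by
  classical
  have hstarv : ∀ {q : ℕ} (z : Fin q → ℝ), star z = z := fun z => funext fun i => rfl
  have hflip : ∀ {a b : ℕ} (M : Matrix (Fin a) (Fin b) ℝ) (x : Fin b → ℝ) (z : Fin a → ℝ),
      (M *ᵥ x) ⬝ᵥ z = x ⬝ᵥ (Mᵀ *ᵥ z) := by
    intro a b M x z
    rw [Matrix.dotProduct_mulVec, Matrix.vecMul_transpose]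
  -- S is symmetric positive definite
  have hDpd : (Matrix.diagonal p).PosDef := Matrix.PosDef.diagonal hp
  have hSherm : S.IsHermitian := by
    have : Sᴴ = S := by
      rw [Matrix.conjTranspose_eq_transpose_of_trivial, hS, Matrix.transpose_mul,
        Matrix.transpose_mul, Matrix.transpose_transpose, Matrix.diagonal_transpose,
        Matrix.mul_assoc]
    exact this
  have hquad : ∀ z : Fin d → ℝ,
      z ⬝ᵥ (S *ᵥ z) = (A *ᵥ z) ⬝ᵥ (Matrix.diagonal p *ᵥ (A *ᵥ z)) := by
    intro z
    rw [hS, ← Matrix.mulVec_mulVec, ← Matrix.mulVec_mulVec, Matrix.dotProduct_mulVec,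
      Matrix.vecMul_transpose]
  have hSpd : S.PosDef := by
    refine Matrix.PosDef.of_dotProduct_mulVec_pos hSherm fun z hz => ?_
    have hz' : A *ᵥ z ≠ 0 := fun h0 => hz (hA (h0.trans (Matrix.mulVec_zero A).symm))
    have h := hDpd.dotProduct_mulVec_pos hz'
    rw [hstarv] at h ⊢
    rw [hquad z]
    exact h
  have hSunit : IsUnit S := hSpd.isUnit
  have hSdet : IsUnit S.det := (Matrix.isUnit_iff_isUnit_det S).mp hSunit
  have hSipd : S⁻¹.PosDef := hSpd.inv
  have hSit : S⁻¹ᵀ = S⁻¹ := by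
    have h : S⁻¹ᴴ = S⁻¹ := hSipd.isHermitian
    rwa [Matrix.conjTranspose_eq_transpose_of_trivial] at h
  have hSsym : Sᵀ = S := by
    have h : Sᴴ = S := hSherm
    rwa [Matrix.conjTranspose_eq_transpose_of_trivial] at h
  set v := Aᵀ *ᵥ u with hv
  -- columns of B lie in the kernel of N
  have hNB : ∀ w : Fin k → ℝ, N *ᵥ (B *ᵥ w) = 0 := by
    intro w
    have h1 : B.mulVecLin w ∈ LinearMap.ker N.mulVecLin := by
      rw [← hBspan]
      exact LinearMap.mem_range_self _ w
    simpa using h1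
  have hBN : Bᵀ * Nᵀ = 0 := by
    have h1 : N * B = 0 := by
      ext i j
      have h := hNB (Pi.single j 1)
      rw [Matrix.mulVec_mulVec] at h
      have := congrFun h i
      simpa [Matrix.mulVec_single] using this
    rw [← Matrix.transpose_mul, h1, Matrix.transpose_zero]
  -- the reduced matrix M₁ = Bᵀ S B
  set M₁ := Bᵀ * S * B with hM₁
  have hM₁herm : M₁.IsHermitian := by
    have : M₁ᴴ = M₁ := by
      rw [hM₁, Matrix.conjTranspose_eq_transpose_of_trivial, Matrix.transpose_mul,
        Matrix.transpose_mul, Matrix.transpose_transpose, hSsym, Matrix.mul_assoc]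
    exact this
  have hM₁quad : ∀ w : Fin k → ℝ, w ⬝ᵥ (M₁ *ᵥ w) = (B *ᵥ w) ⬝ᵥ (S *ᵥ (B *ᵥ w)) := by
    intro w
    rw [hM₁, ← Matrix.mulVec_mulVec, ← Matrix.mulVec_mulVec, Matrix.dotProduct_mulVec,
      Matrix.vecMul_transpose]
  have hBinj : Function.Injective B.mulVec := Matrix.mulVec_injective_iff.mpr hBind
  have hM₁pd : M₁.PosDef := by
    refine Matrix.PosDef.of_dotProduct_mulVec_pos hM₁herm fun w hw => ?_
    have hw' : B *ᵥ w ≠ 0 := fun h0 => hw (hBinj (h0.trans (Matrix.mulVec_zero B).symm))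
    have h := hSpd.dotProduct_mulVec_pos hw'
    rw [hstarv] at h ⊢
    rw [hM₁quad w]
    exact h
  have hM₁det : IsUnit M₁.det := (Matrix.isUnit_iff_isUnit_det M₁).mp hM₁pd.isUnit
  obtain ⟨hG1a, -, -, -⟩ := moorePenrose_spec hM₁herm
  set G₁ := moorePenrose M₁ with hG₁
  set x := B *ᵥ (G₁ *ᵥ (Bᵀ *ᵥ v)) with hx
  -- properties of the left-hand side x
  have hx1 : N *ᵥ x = 0 := hNB _
  have hMinv : M₁ * M₁⁻¹ = 1 := Matrix.mul_nonsing_inv _ hM₁det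
  have step : M₁ * G₁ * Bᵀ = Bᵀ := by
    calc M₁ * G₁ * Bᵀ = M₁ * G₁ * (M₁ * (M₁⁻¹ * Bᵀ)) := by
          rw [← Matrix.mul_assoc M₁ M₁⁻¹ Bᵀ, hMinv, Matrix.one_mul]
      _ = M₁ * G₁ * M₁ * (M₁⁻¹ * Bᵀ) := by
          rw [Matrix.mul_assoc (M₁ * G₁) M₁ (M₁⁻¹ * Bᵀ)]
      _ = M₁ * (M₁⁻¹ * Bᵀ) := by rw [hG1a]
      _ = Bᵀ := by rw [← Matrix.mul_assoc, hMinv, Matrix.one_mul]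
  have key₁ : Bᵀ * (S * (B * (G₁ * Bᵀ))) = Bᵀ := by
    calc Bᵀ * (S * (B * (G₁ * Bᵀ))) = M₁ * G₁ * Bᵀ := by
          rw [hM₁]
          simp only [Matrix.mul_assoc]
      _ = Bᵀ := step
  have hx2 : Bᵀ *ᵥ (S *ᵥ x) = Bᵀ *ᵥ v := by
    rw [hx]
    simp only [Matrix.mulVec_mulVec]
    rw [key₁]
  -- the matrix M₂ = N S⁻¹ Nᵀ
  set M₂ := N * S⁻¹ * Nᵀ with hM₂
  have hM₂herm : M₂.IsHermitian := by
    have : M₂ᴴ = M₂ := by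
      rw [hM₂, Matrix.conjTranspose_eq_transpose_of_trivial, Matrix.transpose_mul,
        Matrix.transpose_mul, Matrix.transpose_transpose, hSit, Matrix.mul_assoc]
    exact this
  obtain ⟨hG2a, -, hG2c, -⟩ := moorePenrose_spec hM₂herm
  set G₂ := moorePenrose M₂ with hG₂
  set w₂ := N *ᵥ (S⁻¹ *ᵥ v) with hw₂
  set y := S⁻¹ *ᵥ (-(Nᵀ *ᵥ (G₂ *ᵥ w₂)) + v) with hy
  -- the residual r is orthogonal to the range of M₂
  have hperp : ∀ z : Fin m → ℝ, (w₂ - M₂ *ᵥ (G₂ *ᵥ w₂)) ⬝ᵥ (M₂ *ᵥ z) = 0 := by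
    intro z
    rw [sub_dotProduct, Matrix.mulVec_mulVec w₂ M₂ G₂,
      hflip (M₂ * G₂) w₂ (M₂ *ᵥ z), hG2c, Matrix.mulVec_mulVec z (M₂ * G₂) M₂,
      hG2a, sub_self]
  set r := w₂ - M₂ *ᵥ (G₂ *ᵥ w₂) with hr
  have e2 : r ⬝ᵥ (M₂ *ᵥ r) = (Nᵀ *ᵥ r) ⬝ᵥ (S⁻¹ *ᵥ (Nᵀ *ᵥ r)) := by
    rw [hM₂, ← Matrix.mulVec_mulVec, ← Matrix.mulVec_mulVec, Matrix.dotProduct_mulVec,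
      ← Matrix.mulVec_transpose]
  have h1 : (Nᵀ *ᵥ r) ⬝ᵥ (S⁻¹ *ᵥ (Nᵀ *ᵥ r)) = 0 := by
    rw [← e2]
    exact hperp r
  have h2 : S⁻¹ *ᵥ (Nᵀ *ᵥ r) = 0 :=
    (hSipd.posSemidef.dotProduct_mulVec_zero_iff _).mp (by rw [hstarv]; exact h1)
  have hSiinj : Function.Injective S⁻¹.mulVec :=
    Matrix.mulVec_injective_iff_isUnit.mpr hSipd.isUnit
  have hNr : Nᵀ *ᵥ r = 0 := hSiinj (h2.trans (Matrix.mulVec_zero _).symm)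
  have hrw : r ⬝ᵥ w₂ = 0 := by
    rw [hw₂, Matrix.dotProduct_mulVec, ← Matrix.mulVec_transpose, hNr, zero_dotProduct]
  have hrr : r ⬝ᵥ r = 0 := by
    nth_rewrite 2 [hr]
    rw [dotProduct_sub, hrw, hperp, sub_self]
  have h00 : w₂ - M₂ *ᵥ (G₂ *ᵥ w₂) = 0 := by
    rw [← hr]
    exact dotProduct_self_eq_zero.mp hrr
  -- properties of the right-hand side y
  have hy1 : N *ᵥ y = 0 := by
    have key : N *ᵥ y = w₂ - M₂ *ᵥ (G₂ *ᵥ w₂) := by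
      rw [hy, hM₂, hw₂]
      simp only [Matrix.mulVec_add, Matrix.mulVec_neg, Matrix.mulVec_mulVec, Matrix.mul_assoc]
      abel
    rw [key]
    exact h00
  have hy2 : Bᵀ *ᵥ (S *ᵥ y) = Bᵀ *ᵥ v := by
    have hSy : S *ᵥ y = -(Nᵀ *ᵥ (G₂ *ᵥ w₂)) + v := by
      rw [hy, Matrix.mulVec_mulVec, Matrix.mul_nonsing_inv _ hSdet, Matrix.one_mulVec]
    rw [hSy, Matrix.mulVec_add, Matrix.mulVec_neg, Matrix.mulVec_mulVec (G₂ *ᵥ w₂) Bᵀ Nᵀ,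
      hBN, Matrix.zero_mulVec, neg_zero, zero_add]
  -- uniqueness: x = y
  have hz : N *ᵥ (x - y) = 0 := by
    rw [Matrix.mulVec_sub, hx1, hy1, sub_self]
  obtain ⟨w, hw⟩ : ∃ w : Fin k → ℝ, B *ᵥ w = x - y := by
    have hmem : (x - y) ∈ LinearMap.ker N.mulVecLin := by simpa using hz
    rw [← hBspan] at hmem
    obtain ⟨w, hw⟩ := hmem
    exact ⟨w, by simpa using hw⟩
  have hBz : Bᵀ *ᵥ (S *ᵥ (x - y)) = 0 := by
    rw [Matrix.mulVec_sub, Matrix.mulVec_sub, hx2, hy2, sub_self]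
  have hq : (B *ᵥ w) ⬝ᵥ (S *ᵥ (B *ᵥ w)) = 0 := by
    rw [hflip B w (S *ᵥ (B *ᵥ w)), hw, hBz, dotProduct_zero]
  have hSBw : S *ᵥ (B *ᵥ w) = 0 :=
    (hSpd.posSemidef.dotProduct_mulVec_zero_iff _).mp (by rw [hstarv]; exact hq)
  have hSinj : Function.Injective S.mulVec := Matrix.mulVec_injective_iff_isUnit.mpr hSunit
  have hBw : B *ᵥ w = 0 := hSinj (hSBw.trans (Matrix.mulVec_zero _).symm)
  have hxy : x - y = 0 := by
    rw [← hw]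
    exact hBw
  exact sub_eq_zero.mp hxy
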